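/- Fix c > 0. The function x ↦ R_c(x) - c/(x(c-x)), where R_c(x) = -ψ(x) - ψ(c-x) - 2γ, is strictly decreasing on (0, c/2) and strictly increasing on (c/2, c), with limits -ψ(1+c) - γ as x → 0⁺ and as x → c⁻, and value -2ψ(c/2) - 2γ - 4/c at x = c/2. -/

import Mathlib

noncomputable def digamma (x : ℝ) : ℝ := deriv (fun y : ℝ => Real.log (Real.Gamma y)) x

noncomputable def Bc (c x : ℝ) : ℝ := Real.Gamma x * Real.Gamma (c - x) / Real.Gamma c

noncomputable def Rc (c x : ℝ) : ℝ :=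
  -digamma x - digamma (c - x) - 2 * Real.eulerMascheroniConstant

open Real Filter Topology Set Finset

lemma digamma_hasDerivAt {x : ℝ} (hx : 0 < x) :
    HasDerivAt (fun y : ℝ => Real.log (Real.Gamma y)) (digamma x) x := by
  have hd : DifferentiableAt ℝ (fun y : ℝ => Real.log (Real.Gamma y)) x := by
    refine DifferentiableAt.log (Real.differentiableAt_Gamma ?_) (Real.Gamma_pos_of_pos hx).ne'
    intro m
    have : (0:ℝ) ≤ m := Nat.cast_nonneg m
    intro h; rw [h] at hx; linarith
  exact hd.hasDerivAt

lemma digamma_add_one {x : ℝ} (hx : 0 < x) : digamma (x + 1) = digamma x + 1 / x := by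
  have h1 : HasDerivAt (fun y : ℝ => Real.log (Real.Gamma (y + 1))) (digamma (x + 1)) x := by
    simpa [Function.comp_def] using (digamma_hasDerivAt (by linarith : (0:ℝ) < x + 1)).comp x
      ((hasDerivAt_id x).add_const 1)
  have h2 : HasDerivAt (fun y : ℝ => Real.log (Real.Gamma y) + Real.log y)
      (digamma x + 1 / x) x := by
    simpa [one_div, Pi.add_def] using (digamma_hasDerivAt hx).add (Real.hasDerivAt_log hx.ne')
  have heq : (fun y : ℝ => Real.log (Real.Gamma (y + 1))) =ᶠ[nhds x]
      (fun y : ℝ => Real.log (Real.Gamma y) + Real.log y) := by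
    filter_upwards [eventually_gt_nhds hx] with y hy
    rw [Real.Gamma_add_one hy.ne', Real.log_mul hy.ne' (Real.Gamma_pos_of_pos hy).ne']
    ring
  have := h1.congr_of_eventuallyEq heq.symm
  exact this.unique h2

lemma digamma_one : digamma 1 = -Real.eulerMascheroniConstant := by
  have h := Real.hasDerivAt_Gamma_one.log (by simp [Real.Gamma_one])
  have : digamma 1 = -Real.eulerMascheroniConstant / Real.Gamma 1 := h.deriv
  simpa [Real.Gamma_one] using this

lemma digamma_mono : MonotoneOn digamma (Set.Ioi 0) := by
  have h := Real.convexOn_log_Gamma.monotoneOn_deriv (fun x hx => by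
    refine DifferentiableAt.log (Real.differentiableAt_Gamma ?_) (Real.Gamma_pos_of_pos hx).ne'
    intro m
    have : (0:ℝ) ≤ m := Nat.cast_nonneg m
    intro heq
    rw [heq] at hx
    simp only [Set.mem_Ioi] at hx
    linarith)
  intro a ha b hb hab
  have := h ha hb hab
  simpa [digamma, Function.comp_def] using this

lemma digamma_add_nat {x : ℝ} (hx : 0 < x) (N : ℕ) :
    digamma (x + N) = digamma x + ∑ k ∈ Finset.range N, 1 / (x + k) := by
  induction N with
  | zero => simp
  | succ n ih =>
      have hxn : 0 < x + n := by positivity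
      have : digamma (x + (n + 1 : ℕ)) = digamma (x + n) + 1 / (x + n) := by
        have := digamma_add_one hxn
        rw [← this]
        congr 1
        push_cast
        ring
      rw [this, ih, Finset.sum_range_succ]
      ring

lemma digamma_hasSum {a b : ℝ} (ha : 0 < a) (hab : a ≤ b) :
    HasSum (fun n : ℕ => 1 / ((n : ℝ) + a) - 1 / ((n : ℝ) + b))
      (digamma b - digamma a) := by
  have hb : 0 < b := lt_of_lt_of_le ha hab
  have hnonneg : ∀ n : ℕ, 0 ≤ 1 / ((n : ℝ) + a) - 1 / ((n : ℝ) + b) := by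
    intro n
    have h1 : (0:ℝ) < n + a := by positivity
    have : 1 / ((n : ℝ) + b) ≤ 1 / ((n : ℝ) + a) :=
      one_div_le_one_div_of_le h1 (by linarith)
    linarith
  rw [hasSum_iff_tendsto_nat_of_nonneg hnonneg]
  have hsum : ∀ N : ℕ, ∑ n ∈ Finset.range N, (1 / ((n : ℝ) + a) - 1 / ((n : ℝ) + b)) =
      (digamma b - digamma a) - (digamma (b + N) - digamma (a + N)) := by
    intro N
    have h1 := digamma_add_nat ha N
    have h2 := digamma_add_nat hb N
    rw [Finset.sum_sub_distrib]
    have e1 : ∑ n ∈ Finset.range N, 1 / ((n : ℝ) + a)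
        = ∑ n ∈ Finset.range N, 1 / (a + (n : ℝ)) := by
      apply Finset.sum_congr rfl; intro n _; rw [add_comm]
    have e2 : ∑ n ∈ Finset.range N, 1 / ((n : ℝ) + b)
        = ∑ n ∈ Finset.range N, 1 / (b + (n : ℝ)) := by
      apply Finset.sum_congr rfl; intro n _; rw [add_comm]
    rw [e1, e2]
    linarith [h1, h2]
  have hd0 : Tendsto (fun N : ℕ => digamma (b + N) - digamma (a + N)) atTop (nhds 0) := by
    set M : ℕ := ⌈b - a⌉₊ with hM
    have hbaM : b - a ≤ M := Nat.le_ceil _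
    have hub : ∀ N : ℕ, digamma (b + N) - digamma (a + N) ≤ M / (a + N) := by
      intro N
      have haN : 0 < a + (N : ℝ) := by positivity
      have h3 : digamma (b + N) ≤ digamma ((a + N) + M) := by
        apply digamma_mono (by simp only [Set.mem_Ioi]; positivity)
          (by simp only [Set.mem_Ioi]; positivity)
        linarith
      have h4 : digamma ((a + N) + M) = digamma (a + N) + ∑ k ∈ Finset.range M, 1 / (a + N + k) :=
        digamma_add_nat haN M
      have h5 : ∑ k ∈ Finset.range M, 1 / (a + (N:ℝ) + k) ≤ ∑ k ∈ Finset.range M, 1 / (a + N) := by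
        apply Finset.sum_le_sum
        intro k _
        exact one_div_le_one_div_of_le haN (by linarith [Nat.cast_nonneg (α := ℝ) k])
      have h6 : ∑ k ∈ Finset.range M, 1 / (a + (N:ℝ)) = M / (a + N) := by
        rw [Finset.sum_const, Finset.card_range]
        simp [div_eq_mul_inv, mul_comm]
      nlinarith [h3, h4, h5, h6]
    have hlb : ∀ N : ℕ, 0 ≤ digamma (b + N) - digamma (a + N) := by
      intro N
      have haN : 0 < a + (N : ℝ) := by positivity
      have := digamma_mono (by simp only [Set.mem_Ioi]; positivity : a + (N:ℝ) ∈ Set.Ioi 0)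
        (by simp only [Set.mem_Ioi]; positivity : b + (N:ℝ) ∈ Set.Ioi 0) (by linarith)
      linarith
    have htop : Tendsto (fun N : ℕ => a + (N : ℝ)) atTop atTop :=
      tendsto_atTop_add_const_left _ a tendsto_natCast_atTop_atTop
    have hM0 : Tendsto (fun N : ℕ => (M : ℝ) / (a + N)) atTop (nhds 0) := by
      simpa [div_eq_mul_inv] using htop.inv_tendsto_atTop.const_mul (M : ℝ)
    exact squeeze_zero hlb hub hM0
  have h := (tendsto_const_nhds (x := digamma b - digamma a) (f := atTop (α := ℕ))).sub hd0
  rw [sub_zero] at h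
  exact h.congr (fun N => (hsum N).symm)

lemma digamma_summable {a b : ℝ} (ha : 0 < a) (hab : a ≤ b) :
    Summable (fun n : ℕ => 1 / ((n : ℝ) + a) - 1 / ((n : ℝ) + b)) :=
  (digamma_hasSum ha hab).summable

lemma digamma_tsum {a b : ℝ} (ha : 0 < a) (hab : a ≤ b) :
    digamma b - digamma a = ∑' n : ℕ, (1 / ((n : ℝ) + a) - 1 / ((n : ℝ) + b)) :=
  (digamma_hasSum ha hab).tsum_eq.symm

lemma term_eq {p q : ℝ} (n : ℕ) (hp : 0 < p) (hq : 0 < q) :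
    1 / ((n : ℝ) + p) - 1 / ((n : ℝ) + q) = (q - p) / (((n : ℝ) + p) * ((n : ℝ) + q)) := by
  have h1 : (0:ℝ) < n + p := by positivity
  have h2 : (0:ℝ) < n + q := by positivity
  field_simp
  ring

/-- Key comparison: increments of digamma over intervals of equal length. -/
lemma digamma_key {p q r s : ℝ} (hp : 0 < p) (hpq : p < q) (hr : 0 < r)
    (hrs : r < s) (hpr : p < r) (hqs : q < s) (hdiff : q - p = s - r) :
    digamma s - digamma r < digamma q - digamma p := by
  rw [digamma_tsum hp hpq.le, digamma_tsum hr hrs.le]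
  have h0 : (0:ℝ) < q - p := by linarith
  have hle : ∀ n : ℕ, 1 / ((n : ℝ) + r) - 1 / ((n : ℝ) + s) ≤
      1 / ((n : ℝ) + p) - 1 / ((n : ℝ) + q) := by
    intro n
    rw [term_eq n hr (hr.trans hrs), term_eq n hp (hp.trans hpq), ← hdiff]
    gcongr <;> nlinarith [Nat.cast_nonneg (α := ℝ) n]
  have hlt : 1 / ((0 : ℕ) + r) - 1 / ((0 : ℕ) + s) <
      1 / ((0 : ℕ) + p) - 1 / ((0 : ℕ) + q) := by
    rw [term_eq 0 hr (hr.trans hrs), term_eq 0 hp (hp.trans hpq), ← hdiff]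
    have hb : (0:ℝ) < ((0:ℕ) + p) * ((0:ℕ) + q) := by
      push_cast [zero_add]
      exact mul_pos hp (hp.trans hpq)
    have hbc : ((0:ℕ) + p) * ((0:ℕ) + q) < ((0:ℕ) + r) * ((0:ℕ) + s) := by
      push_cast
      nlinarith
    exact div_lt_div_of_pos_left h0 hb hbc
  exact Summable.tsum_lt_tsum hle hlt (digamma_summable hr hrs.le) (digamma_summable hp hpq.le)

noncomputable def Kdg : ℝ := ∑' n : ℕ, 1 / ((n : ℝ) + 1) ^ 2

lemma Kdg_nonneg : 0 ≤ Kdg := tsum_nonneg (fun n => by positivity)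

/-- A Lipschitz-type bound for digamma on [1, ∞). -/
lemma digamma_lip {a b : ℝ} (ha : 1 ≤ a) (hab : a ≤ b) :
    digamma b ≤ digamma a + (b - a) * Kdg := by
  have ha0 : (0:ℝ) < a := by linarith
  have hb0 : (0:ℝ) < b := by linarith
  have key : digamma b - digamma a ≤ (b - a) * Kdg := by
    rw [digamma_tsum ha0 hab, Kdg]
    have hK : Summable (fun n : ℕ => 1 / ((n : ℝ) + 1) ^ 2) := by
      have := summable_one_div_nat_pow.mpr (le_refl 2)
      exact_mod_cast (summable_nat_add_iff 1).mpr this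
    have h := Summable.tsum_le_tsum (f := fun n : ℕ => 1 / ((n : ℝ) + a) - 1 / ((n : ℝ) + b))
      (g := fun n : ℕ => (b - a) * (1 / ((n : ℝ) + 1) ^ 2)) ?_ (digamma_summable ha0 hab)
      (hK.mul_left (b - a))
    · rwa [tsum_mul_left] at h
    · intro n
      rw [term_eq n ha0 hb0]
      have h2 : ((n : ℝ) + 1) ≤ (n : ℝ) + a := by linarith
      have h3 : ((n : ℝ) + 1) ≤ (n : ℝ) + b := by linarith
      have h4 : (0:ℝ) < (n : ℝ) + 1 := by positivity
      rw [mul_one_div]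
      have hprod : ((n : ℝ) + 1) * ((n : ℝ) + 1) ≤ ((n : ℝ) + a) * ((n : ℝ) + b) :=
        mul_le_mul h2 h3 (by positivity) (by positivity)
      gcongr
      · linarith
  linarith

/-- The function in terms of shifted digamma. -/
lemma f_eq {c x : ℝ} (hx : 0 < x) (hxc : x < c) :
    Rc c x - c / (x * (c - x)) =
      -digamma (1 + x) - digamma (1 + c - x) - 2 * Real.eulerMascheroniConstant := by
  have hcx : 0 < c - x := by linarith
  have h1 : digamma (1 + x) = digamma x + 1 / x := by
    rw [add_comm]; exact digamma_add_one hx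
  have h2 : digamma (1 + c - x) = digamma (c - x) + 1 / (c - x) := by
    have : 1 + c - x = (c - x) + 1 := by ring
    rw [this]; exact digamma_add_one hcx
  rw [h1, h2, Rc]
  have : c / (x * (c - x)) = 1 / x + 1 / (c - x) := by
    field_simp
    ring
  rw [this]
  ring

theorem stmt_15 (c : ℝ) (hc : 0 < c) :
    StrictAntiOn (fun x => Rc c x - c / (x * (c - x))) (Set.Ioo 0 (c / 2)) ∧
      StrictMonoOn (fun x => Rc c x - c / (x * (c - x))) (Set.Ioo (c / 2) c) ∧
      Filter.Tendsto (fun x => Rc c x - c / (x * (c - x))) (nhdsWithin 0 (Set.Ioi 0))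
        (nhds (-digamma (1 + c) - Real.eulerMascheroniConstant)) ∧
      Filter.Tendsto (fun x => Rc c x - c / (x * (c - x))) (nhdsWithin c (Set.Iio c))
        (nhds (-digamma (1 + c) - Real.eulerMascheroniConstant)) ∧
      Rc c (c / 2) - c / ((c / 2) * (c - c / 2)) =
        -2 * digamma (c / 2) - 2 * Real.eulerMascheroniConstant - 4 / c := by
  have hK0 := Kdg_nonneg
  refine ⟨?_, ?_, ?_, ?_, ?_⟩
  · -- strictly decreasing on (0, c/2)
    intro x hx y hy hxy
    obtain ⟨hx0, hxc2⟩ := hx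
    obtain ⟨hy0, hyc2⟩ := hy
    have hxc : x < c := by linarith
    have hyc : y < c := by linarith
    simp only []
    rw [f_eq hx0 hxc, f_eq hy0 hyc]
    have key := digamma_key (p := 1 + x) (q := 1 + y) (r := 1 + c - y) (s := 1 + c - x)
      (by linarith) (by linarith) (by linarith) (by linarith) (by linarith) (by linarith)
      (by ring)
    linarith
  · -- strictly increasing on (c/2, c)
    intro x hx y hy hxy
    obtain ⟨hxc2, hxc⟩ := hx
    obtain ⟨hyc2, hyc⟩ := hy
    have hx0 : 0 < x := by linarith
    have hy0 : 0 < y := by linarith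
    simp only []
    rw [f_eq hx0 hxc, f_eq hy0 hyc]
    have key := digamma_key (p := 1 + c - y) (q := 1 + c - x) (r := 1 + x) (s := 1 + y)
      (by linarith) (by linarith) (by linarith) (by linarith) (by linarith) (by linarith)
      (by ring)
    linarith
  · -- limit at 0⁺
    have hmem : Set.Ioo (0:ℝ) (c / 2) ∈ nhdsWithin (0:ℝ) (Set.Ioi 0) :=
      Ioo_mem_nhdsGT_of_mem ⟨le_refl 0, by positivity⟩
    have hlow : Tendsto
        (fun x : ℝ => (-digamma (1 + c) - Real.eulerMascheroniConstant) - 2 * Kdg * x)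
        (nhdsWithin 0 (Set.Ioi 0))
        (nhds (-digamma (1 + c) - Real.eulerMascheroniConstant)) := by
      have hcont : Continuous (fun x : ℝ =>
          (-digamma (1 + c) - Real.eulerMascheroniConstant) - 2 * Kdg * x) := by fun_prop
      have h2 : Tendsto (fun x : ℝ =>
          (-digamma (1 + c) - Real.eulerMascheroniConstant) - 2 * Kdg * x)
          (nhdsWithin (0:ℝ) (Set.Ioi 0))
          (nhds ((-digamma (1 + c) - Real.eulerMascheroniConstant) - 2 * Kdg * 0)) :=
        (hcont.tendsto 0).mono_left nhdsWithin_le_nhds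
      simpa using h2
    have hhigh : Tendsto
        (fun x : ℝ => (-digamma (1 + c) - Real.eulerMascheroniConstant) + 2 * Kdg * x)
        (nhdsWithin 0 (Set.Ioi 0))
        (nhds (-digamma (1 + c) - Real.eulerMascheroniConstant)) := by
      have hcont : Continuous (fun x : ℝ =>
          (-digamma (1 + c) - Real.eulerMascheroniConstant) + 2 * Kdg * x) := by fun_prop
      have h2 : Tendsto (fun x : ℝ =>
          (-digamma (1 + c) - Real.eulerMascheroniConstant) + 2 * Kdg * x)
          (nhdsWithin (0:ℝ) (Set.Ioi 0))
          (nhds ((-digamma (1 + c) - Real.eulerMascheroniConstant) + 2 * Kdg * 0)) :=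
        (hcont.tendsto 0).mono_left nhdsWithin_le_nhds
      simpa using h2
    refine tendsto_of_tendsto_of_tendsto_of_le_of_le' hlow hhigh ?_ ?_
    · filter_upwards [hmem] with x hx
      obtain ⟨hx0, hxc2⟩ := hx
      have hxc : x < c := by linarith
      rw [f_eq hx0 hxc]
      have b1 : digamma (1 + x) ≤ digamma 1 + (1 + x - 1) * Kdg :=
        digamma_lip le_rfl (by linarith)
      have b4 : digamma (1 + c - x) ≤ digamma (1 + c) :=
        digamma_mono (by simp only [Set.mem_Ioi]; linarith)
          (by simp only [Set.mem_Ioi]; linarith) (by linarith)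
      rw [digamma_one] at b1
      have e : (1 + x - 1 : ℝ) = x := by ring
      rw [e] at b1
      nlinarith
    · filter_upwards [hmem] with x hx
      obtain ⟨hx0, hxc2⟩ := hx
      have hxc : x < c := by linarith
      rw [f_eq hx0 hxc]
      have b2 : digamma 1 ≤ digamma (1 + x) :=
        digamma_mono (by norm_num) (by simp only [Set.mem_Ioi]; linarith) (by linarith)
      have b3 : digamma (1 + c) ≤ digamma (1 + c - x) + (1 + c - (1 + c - x)) * Kdg :=
        digamma_lip (by linarith) (by linarith)
      rw [digamma_one] at b2
      have e : (1 + c - (1 + c - x) : ℝ) = x := by ring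
      rw [e] at b3
      nlinarith
  · -- limit at c⁻
    have hmem : Set.Ioo (c / 2) c ∈ nhdsWithin c (Set.Iio c) :=
      Ioo_mem_nhdsLT_of_mem ⟨by linarith, le_refl c⟩
    have hlow : Tendsto
        (fun x : ℝ => (-digamma (1 + c) - Real.eulerMascheroniConstant) - 2 * Kdg * (c - x))
        (nhdsWithin c (Set.Iio c))
        (nhds (-digamma (1 + c) - Real.eulerMascheroniConstant)) := by
      have hcont : Continuous (fun x : ℝ =>
          (-digamma (1 + c) - Real.eulerMascheroniConstant) - 2 * Kdg * (c - x)) := by fun_prop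
      have h2 : Tendsto (fun x : ℝ =>
          (-digamma (1 + c) - Real.eulerMascheroniConstant) - 2 * Kdg * (c - x))
          (nhdsWithin c (Set.Iio c))
          (nhds ((-digamma (1 + c) - Real.eulerMascheroniConstant) - 2 * Kdg * (c - c))) :=
        (hcont.tendsto c).mono_left nhdsWithin_le_nhds
      simpa using h2
    have hhigh : Tendsto
        (fun x : ℝ => (-digamma (1 + c) - Real.eulerMascheroniConstant) + 2 * Kdg * (c - x))
        (nhdsWithin c (Set.Iio c))
        (nhds (-digamma (1 + c) - Real.eulerMascheroniConstant)) := by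
      have hcont : Continuous (fun x : ℝ =>
          (-digamma (1 + c) - Real.eulerMascheroniConstant) + 2 * Kdg * (c - x)) := by fun_prop
      have h2 : Tendsto (fun x : ℝ =>
          (-digamma (1 + c) - Real.eulerMascheroniConstant) + 2 * Kdg * (c - x))
          (nhdsWithin c (Set.Iio c))
          (nhds ((-digamma (1 + c) - Real.eulerMascheroniConstant) + 2 * Kdg * (c - c))) :=
        (hcont.tendsto c).mono_left nhdsWithin_le_nhds
      simpa using h2
    refine tendsto_of_tendsto_of_tendsto_of_le_of_le' hlow hhigh ?_ ?_
    · filter_upwards [hmem] with x hx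
      obtain ⟨hxc2, hxc⟩ := hx
      have hx0 : 0 < x := by linarith
      rw [f_eq hx0 hxc]
      have b2 : digamma (1 + x) ≤ digamma (1 + c) :=
        digamma_mono (by simp only [Set.mem_Ioi]; linarith)
          (by simp only [Set.mem_Ioi]; linarith) (by linarith)
      have b3 : digamma (1 + c - x) ≤ digamma 1 + (1 + c - x - 1) * Kdg :=
        digamma_lip le_rfl (by linarith)
      have e2 : (1 + c - x - 1 : ℝ) = c - x := by ring
      rw [e2, digamma_one] at b3
      nlinarith
    · filter_upwards [hmem] with x hx
      obtain ⟨hxc2, hxc⟩ := hx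
      have hx0 : 0 < x := by linarith
      rw [f_eq hx0 hxc]
      have b1 : digamma (1 + c) ≤ digamma (1 + x) + (1 + c - (1 + x)) * Kdg :=
        digamma_lip (by linarith) (by linarith)
      have e1 : (1 + c - (1 + x) : ℝ) = c - x := by ring
      rw [e1] at b1
      have b4 : digamma 1 ≤ digamma (1 + c - x) :=
        digamma_mono (by norm_num) (by simp only [Set.mem_Ioi]; linarith) (by linarith)
      rw [digamma_one] at b4
      nlinarith
  · -- value at c/2
    have h1 : c - c / 2 = c / 2 := by ring
    rw [Rc, h1]
    have h2 : c / (c / 2 * (c / 2)) = 4 / c := by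
      field_simp
      ring
    rw [h2]
    ring
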